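/- Let M be a square complex matrix with singular value decomposition M = U D V*. Then for 0 < p < 2 < q, we have ‖M‖_p ≥ ‖D‖_p ≥ ‖D‖_q ≥ ‖M‖_q, where ‖·‖_p denotes the entrywise ℓ_p-norm. -/

import Mathlib

open Finset in
lemma aux_sum_rpow_le {ι : Type*} (s : Finset ι) (x : ι → ℝ) (hx : ∀ i ∈ s, 0 ≤ x i)
    {r : ℝ} (hr : 1 ≤ r) : ∑ i ∈ s, x i ^ r ≤ (∑ i ∈ s, x i) ^ r := by
  have hS : 0 ≤ ∑ i ∈ s, x i := Finset.sum_nonneg hx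
  have h1 : ∀ i ∈ s, x i ^ r ≤ x i * (∑ j ∈ s, x j) ^ (r - 1) := by
    intro i hi
    have hxi := hx i hi
    have hle : x i ≤ ∑ j ∈ s, x j := Finset.single_le_sum hx hi
    calc x i ^ r = x i ^ (1 + (r - 1)) := by ring_nf
      _ = x i ^ (1:ℝ) * x i ^ (r - 1) := Real.rpow_add' hxi (by linarith)
      _ ≤ x i * (∑ j ∈ s, x j) ^ (r - 1) := by
          rw [Real.rpow_one]
          exact mul_le_mul_of_nonneg_left
            (Real.rpow_le_rpow hxi hle (by linarith)) hxi
  calc ∑ i ∈ s, x i ^ r ≤ ∑ i ∈ s, x i * (∑ j ∈ s, x j) ^ (r - 1) :=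
        Finset.sum_le_sum h1
    _ = (∑ i ∈ s, x i) * (∑ j ∈ s, x j) ^ (r - 1) := by rw [← Finset.sum_mul]
    _ = (∑ i ∈ s, x i) ^ r := by
        nth_rewrite 1 [← Real.rpow_one (∑ i ∈ s, x i)]
        rw [← Real.rpow_add' hS (by linarith : (1:ℝ) + (r-1) ≠ 0)]
        norm_num

lemma aux_rpow_sum_le {ι : Type*} (s : Finset ι) (x : ι → ℝ) (hx : ∀ i ∈ s, 0 ≤ x i)
    {r : ℝ} (hr0 : 0 < r) (hr : r ≤ 1) : (∑ i ∈ s, x i) ^ r ≤ ∑ i ∈ s, x i ^ r := by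
  have h := aux_sum_rpow_le s (fun i => x i ^ r) (fun i hi => Real.rpow_nonneg (hx i hi) r)
    (r := 1 / r) (by rw [le_div_iff₀ hr0]; linarith)
  have h2 : ∀ i ∈ s, (x i ^ r) ^ ((1:ℝ)/r) = x i := by
    intro i hi
    rw [← Real.rpow_mul (hx i hi), mul_one_div, div_self hr0.ne', Real.rpow_one]
  rw [Finset.sum_congr rfl h2] at h
  have h3 := Real.rpow_le_rpow (Finset.sum_nonneg hx) h hr0.le
  rwa [← Real.rpow_mul (Finset.sum_nonneg fun i hi => Real.rpow_nonneg (hx i hi) r),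
    one_div_mul_cancel hr0.ne', Real.rpow_one] at h3

lemma aux_lp_mono {ι : Type*} (s : Finset ι) (x : ι → ℝ) (hx : ∀ i ∈ s, 0 ≤ x i)
    {p q : ℝ} (hp : 0 < p) (hpq : p ≤ q) :
    (∑ i ∈ s, x i ^ q) ^ ((1:ℝ)/q) ≤ (∑ i ∈ s, x i ^ p) ^ ((1:ℝ)/p) := by
  have hq : 0 < q := lt_of_lt_of_le hp hpq
  have h := aux_sum_rpow_le s (fun i => x i ^ p) (fun i hi => Real.rpow_nonneg (hx i hi) p)
    (r := q / p) ((one_le_div hp).mpr hpq)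
  have h2 : ∀ i ∈ s, (x i ^ p) ^ (q/p) = x i ^ q := by
    intro i hi
    rw [← Real.rpow_mul (hx i hi), mul_div_cancel₀ _ hp.ne']
  rw [Finset.sum_congr rfl h2] at h
  have h3 := Real.rpow_le_rpow (Finset.sum_nonneg fun i hi => Real.rpow_nonneg (hx i hi) q) h
    (by positivity : (0:ℝ) ≤ 1/q)
  rwa [← Real.rpow_mul (Finset.sum_nonneg fun i hi => Real.rpow_nonneg (hx i hi) p),
    (by field_simp : q / p * (1/q) = 1/p)] at h3

lemma aux_star_mul_self (z : ℂ) : star z * z = ((‖z‖ : ℂ))^2 := by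
  rw [Complex.star_def, mul_comm, Complex.mul_conj, Complex.normSq_eq_norm_sq]
  push_cast; ring

lemma aux_mul_star_self (z : ℂ) : z * star z = ((‖z‖ : ℂ))^2 := by
  rw [mul_comm]; exact aux_star_mul_self z

noncomputable def singularValues {n : ℕ} (M : Matrix (Fin n) (Fin n) ℂ) : Fin n → ℝ :=
  fun k => Real.sqrt ((Matrix.isHermitian_conjTranspose_mul_self M).eigenvalues k)

noncomputable def lpNorm {n : ℕ} (p : ℝ) (X : Matrix (Fin n) (Fin n) ℂ) : ℝ :=
  (∑ i, ∑ j, ‖X i j‖ ^ p) ^ ((1 : ℝ) / p)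

theorem duality_gap {n : ℕ} (M U V D : Matrix (Fin n) (Fin n) ℂ)
    (hU : U ∈ Matrix.unitaryGroup (Fin n) ℂ)
    (hV : V ∈ Matrix.unitaryGroup (Fin n) ℂ)
    (hD : D = Matrix.diagonal (fun k => (singularValues M k : ℂ)))
    (hM : M = U * D * V.conjTranspose)
    (p q : ℝ) (hp0 : 0 < p) (hp2 : p < 2) (hq : 2 < q) :
    lpNorm p M ≥ lpNorm p D ∧ lpNorm p D ≥ lpNorm q D ∧ lpNorm q D ≥ lpNorm q M := by
  set d : Fin n → ℝ := singularValues M with hd_def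
  have hd : ∀ k, 0 ≤ d k := fun k => Real.sqrt_nonneg _
  have hq0 : (0:ℝ) < q := by linarith
  -- sums for D
  have hDsum : ∀ r : ℝ, 0 < r →
      ∑ i, ∑ j, (‖D i j‖) ^ r = ∑ k, d k ^ r := by
    intro r hr
    have he : ∀ i j : Fin n, (‖D i j‖) ^ r
        = if j = i then d i ^ r else 0 := by
      intro i j
      rcases eq_or_ne j i with h | h
      · subst h
        simp [hD, Matrix.diagonal_apply_eq, Complex.norm_real, abs_of_nonneg (hd j)]
      · rw [hD, Matrix.diagonal_apply_ne _ (Ne.symm h)]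
        simp [Real.zero_rpow hr.ne', h]
    simp [he]
  -- unitarity facts
  have hU2 : U.conjTranspose * U = 1 := by
    have := (Unitary.mem_iff.mp hU).1
    rwa [Matrix.star_eq_conjTranspose] at this
  have hV1 : V * V.conjTranspose = 1 := by
    have := (Unitary.mem_iff.mp hV).2
    rwa [Matrix.star_eq_conjTranspose] at this
  have hV2 : V.conjTranspose * V = 1 := by
    have := (Unitary.mem_iff.mp hV).1
    rwa [Matrix.star_eq_conjTranspose] at this
  set w : Fin n → Fin n → ℝ := fun j k => (‖V j k‖)^2 with hw_def
  have hw : ∀ j k, 0 ≤ w j k := fun j k => sq_nonneg _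
  -- rows of V are unit vectors
  have hwrow : ∀ j, ∑ k, w j k = 1 := by
    intro j
    have h : (V * V.conjTranspose) j j = (1 : Matrix (Fin n) (Fin n) ℂ) j j := by rw [hV1]
    rw [Matrix.mul_apply] at h
    simp only [Matrix.conjTranspose_apply, Matrix.one_apply_eq] at h
    have h2 : ((∑ k, w j k : ℝ) : ℂ) = ((1:ℝ) : ℂ) := by
      simp only [hw_def]
      push_cast
      rw [← h]
      exact Finset.sum_congr rfl fun k _ => (aux_mul_star_self (V j k)).symm
    exact_mod_cast h2
  -- columns of V are unit vectors
  have hwcol : ∀ k, ∑ j, w j k = 1 := by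
    intro k
    have h : (V.conjTranspose * V) k k = (1 : Matrix (Fin n) (Fin n) ℂ) k k := by rw [hV2]
    rw [Matrix.mul_apply] at h
    simp only [Matrix.conjTranspose_apply, Matrix.one_apply_eq] at h
    have h2 : ((∑ j, w j k : ℝ) : ℂ) = ((1:ℝ) : ℂ) := by
      simp only [hw_def]
      push_cast
      rw [← h]
      exact Finset.sum_congr rfl fun j _ => (aux_star_mul_self (V j k)).symm
    exact_mod_cast h2
  -- M^H M = V (D^2) V^H
  have hDD : D * D = Matrix.diagonal (fun k => ((d k : ℂ) * (d k : ℂ))) := by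
    rw [hD, Matrix.diagonal_mul_diagonal]
  have hDH : D.conjTranspose = D := by
    have hst : (star fun k => ((d k : ℝ) : ℂ)) = fun k => ((d k : ℝ) : ℂ) := by
      funext k
      simp [Complex.conj_ofReal]
    rw [hD, Matrix.diagonal_conjTranspose, hst]
  have hMM : M.conjTranspose * M
      = V * Matrix.diagonal (fun k => ((d k : ℂ) * (d k : ℂ))) * V.conjTranspose := by
    conv_lhs => rw [hM]
    rw [Matrix.conjTranspose_mul, Matrix.conjTranspose_mul,
      Matrix.conjTranspose_conjTranspose, hDH]
    simp only [Matrix.mul_assoc]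
    rw [← Matrix.mul_assoc U.conjTranspose U, hU2, Matrix.one_mul,
      ← Matrix.mul_assoc D D, hDD]
  -- column norms of M
  have hcol : ∀ j, ∑ i, (‖M i j‖)^2 = ∑ k, w j k * d k ^ 2 := by
    intro j
    have h : (M.conjTranspose * M) j j
        = (V * Matrix.diagonal (fun k => ((d k : ℂ) * (d k : ℂ))) * V.conjTranspose) j j := by
      rw [hMM]
    rw [Matrix.mul_apply, Matrix.mul_apply] at h
    simp only [Matrix.conjTranspose_apply, Matrix.mul_diagonal] at h
    have h2 : ((∑ i, (‖M i j‖)^2 : ℝ) : ℂ)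
        = ((∑ k, w j k * d k ^ 2 : ℝ) : ℂ) := by
      calc ((∑ i, (‖M i j‖)^2 : ℝ) : ℂ)
          = ∑ i, star (M i j) * M i j := by
            push_cast
            exact Finset.sum_congr rfl fun i _ => (aux_star_mul_self _).symm
        _ = ∑ k, V j k * ((d k : ℂ) * (d k : ℂ)) * star (V j k) := h
        _ = ((∑ k, w j k * d k ^ 2 : ℝ) : ℂ) := by
            simp only [hw_def]
            push_cast
            refine Finset.sum_congr rfl fun k _ => ?_
            rw [show V j k * ((d k:ℂ) * (d k:ℂ)) * star (V j k)
                = (V j k * star (V j k)) * ((d k:ℂ) * (d k:ℂ)) by ring,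
              aux_mul_star_self]
            ring
    exact_mod_cast h2
  have hnp : ∀ x : ℝ, x ^ ((2:ℝ)) = x ^ (2:ℕ) := fun x => by
    rw [show (2:ℝ) = ((2:ℕ):ℝ) by norm_num, Real.rpow_natCast]
  have hcolr : ∀ j, ∑ i, ‖M i j‖ ^ ((2:ℝ)) = ∑ k, w j k * d k ^ ((2:ℝ)) := by
    intro j
    simp only [hnp]
    exact hcol j
  -- lower bound, entrywise r-norm vs singular values, r ≤ 2
  have lower : ∀ r : ℝ, 0 < r → r ≤ 2 →
      ∑ k, d k ^ r ≤ ∑ i, ∑ j, ‖M i j‖ ^ r := by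
    intro r hr hr2
    have hstep1 : ∑ k, d k ^ r = ∑ j, ∑ k, w j k * d k ^ r := by
      rw [Finset.sum_comm]
      refine Finset.sum_congr rfl fun k _ => ?_
      rw [← Finset.sum_mul, hwcol k, one_mul]
    have hstep2 : ∀ j, ∑ k, w j k * d k ^ r ≤ (∑ k, w j k * d k ^ ((2:ℝ))) ^ (r/2) := by
      intro j
      have h := Real.arith_mean_le_rpow_mean Finset.univ (w j) (fun k => d k ^ r)
        (fun k _ => hw j k) (hwrow j) (fun k _ => Real.rpow_nonneg (hd k) r)
        (p := 2/r) (by rw [le_div_iff₀ hr]; linarith)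
      have e1 : ∀ k : Fin n, (d k ^ r) ^ ((2:ℝ)/r) = d k ^ ((2:ℝ)) := fun k => by
        rw [← Real.rpow_mul (hd k), show r * ((2:ℝ)/r) = 2 by field_simp]
      simp only [e1] at h
      rwa [one_div_div] at h
    have hstep4 : ∀ j, (∑ i, ‖M i j‖ ^ ((2:ℝ))) ^ (r/2)
        ≤ ∑ i, ‖M i j‖ ^ r := by
      intro j
      have h := aux_rpow_sum_le Finset.univ (fun i => ‖M i j‖ ^ ((2:ℝ)))
        (fun i _ => Real.rpow_nonneg (norm_nonneg _) _)
        (r := r/2) (by positivity) (by linarith)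
      have e : ∀ i : Fin n, (‖M i j‖ ^ ((2:ℝ))) ^ (r/2)
          = ‖M i j‖ ^ r := fun i => by
        rw [← Real.rpow_mul (norm_nonneg _), show (2:ℝ) * (r/2) = r by ring]
      simp only [e] at h
      exact h
    calc ∑ k, d k ^ r = ∑ j, ∑ k, w j k * d k ^ r := hstep1
      _ ≤ ∑ j, (∑ k, w j k * d k ^ ((2:ℝ))) ^ (r/2) :=
          Finset.sum_le_sum fun j _ => hstep2 j
      _ = ∑ j, (∑ i, ‖M i j‖ ^ ((2:ℝ))) ^ (r/2) :=
          Finset.sum_congr rfl fun j _ => by rw [hcolr j]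
      _ ≤ ∑ j, ∑ i, ‖M i j‖ ^ r := Finset.sum_le_sum fun j _ => hstep4 j
      _ = ∑ i, ∑ j, ‖M i j‖ ^ r := Finset.sum_comm
  -- upper bound for r ≥ 2
  have upper : ∀ r : ℝ, 2 ≤ r →
      ∑ i, ∑ j, ‖M i j‖ ^ r ≤ ∑ k, d k ^ r := by
    intro r hr2
    have hr : (0:ℝ) < r := by linarith
    have hstep4 : ∀ j, ∑ i, ‖M i j‖ ^ r
        ≤ (∑ i, ‖M i j‖ ^ ((2:ℝ))) ^ (r/2) := by
      intro j
      have h := aux_sum_rpow_le Finset.univ (fun i => ‖M i j‖ ^ ((2:ℝ)))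
        (fun i _ => Real.rpow_nonneg (norm_nonneg _) _)
        (r := r/2) (by linarith)
      have e : ∀ i : Fin n, (‖M i j‖ ^ ((2:ℝ))) ^ (r/2)
          = ‖M i j‖ ^ r := fun i => by
        rw [← Real.rpow_mul (norm_nonneg _), show (2:ℝ) * (r/2) = r by ring]
      simp only [e] at h
      exact h
    have hstep2 : ∀ j, (∑ k, w j k * d k ^ ((2:ℝ))) ^ (r/2)
        ≤ ∑ k, w j k * d k ^ r := by
      intro j
      have h := Real.rpow_arith_mean_le_arith_mean_rpow Finset.univ (w j)
        (fun k => d k ^ ((2:ℝ))) (fun k _ => hw j k) (hwrow j)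
        (fun k _ => Real.rpow_nonneg (hd k) _)
        (p := r/2) (by linarith)
      have e : ∀ k : Fin n, (d k ^ ((2:ℝ))) ^ (r/2) = d k ^ r := fun k => by
        rw [← Real.rpow_mul (hd k), show (2:ℝ) * (r/2) = r by ring]
      simp only [e] at h
      exact h
    calc ∑ i, ∑ j, ‖M i j‖ ^ r
        = ∑ j, ∑ i, ‖M i j‖ ^ r := Finset.sum_comm
      _ ≤ ∑ j, (∑ i, ‖M i j‖ ^ ((2:ℝ))) ^ (r/2) :=
          Finset.sum_le_sum fun j _ => hstep4 j
      _ = ∑ j, (∑ k, w j k * d k ^ ((2:ℝ))) ^ (r/2) :=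
          Finset.sum_congr rfl fun j _ => by rw [hcolr j]
      _ ≤ ∑ j, ∑ k, w j k * d k ^ r := Finset.sum_le_sum fun j _ => hstep2 j
      _ = ∑ k, d k ^ r := by
          rw [Finset.sum_comm]
          refine Finset.sum_congr rfl fun k _ => ?_
          rw [← Finset.sum_mul, hwcol k, one_mul]
  refine ⟨?_, ?_, ?_⟩
  · rw [ge_iff_le]
    simp only [lpNorm]
    rw [hDsum p hp0]
    exact Real.rpow_le_rpow (Finset.sum_nonneg fun k _ => Real.rpow_nonneg (hd k) p)
      (lower p hp0 (by linarith)) (by positivity)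
  · rw [ge_iff_le]
    simp only [lpNorm]
    rw [hDsum p hp0, hDsum q hq0]
    exact aux_lp_mono Finset.univ d (fun k _ => hd k) hp0 (by linarith)
  · rw [ge_iff_le]
    simp only [lpNorm]
    rw [hDsum q hq0]
    exact Real.rpow_le_rpow
      (Finset.sum_nonneg fun i _ => Finset.sum_nonneg fun j _ =>
        Real.rpow_nonneg (norm_nonneg _) q)
      (upper q (by linarith)) (by positivity)
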